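/- Let M ≥ 1 be an integer, α a real with 0 < α < 1, t ≥ 0 a real, and let n, j, k be integers with 1 ≤ j, k ≤ n ≤ M. Then the sum ∑_{x∈ℤ} Φ^{n,t}_{n-j}(x)·Ψ^{n,t}_{n-k}(x) converges absolutely and equals δ_{j,k} (i.e. 1 if j = k and 0 otherwise). -/

import Mathlib

open Complex Real MeasureTheory

noncomputable section

/-- `Ψ^{n,t}_{n-j}(x)` for the case `n ≤ M` (block of slow particles of rate `α`):
`(1/(2πi)) ∮_{|w|=2} (dw/w) (w(w-α))^{n-j} e^{tw} w^{-(x+2n-2M)}`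
(the value is independent of the radius `R > 1`; we take `R = 2`). -/
def Psi (M : ℕ) (α : ℝ) (n j : ℕ) (t : ℝ) (x : ℤ) : ℂ :=
  (2 * (π : ℂ) * I)⁻¹ * ∮ w in C((0 : ℂ), 2),
    w⁻¹ * (w * (w - (α : ℂ))) ^ ((n : ℤ) - (j : ℤ)) * Complex.exp ((t : ℂ) * w) *
      w ^ (-(x + 2 * (n : ℤ) - 2 * (M : ℤ)))

/-- `Φ^{n,t}_{n-j}(x)` for the case `n ≤ M`:
`(1/(2πi)) ∮ dv (2v+2-α)(1+v)^{x+2n-2M} e^{-t(v+1)} ((v+1)(v+1-α))^{-(n-j+1)}`,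
over a (small) circle of radius `r` around `α - 1`, which encloses exactly that point. -/
def Phi (M : ℕ) (α : ℝ) (n j : ℕ) (t : ℝ) (r : ℝ) (x : ℤ) : ℂ :=
  (2 * (π : ℂ) * I)⁻¹ * ∮ v in C((α : ℂ) - 1, r),
    (2 * v + 2 - (α : ℂ)) * (1 + v) ^ (x + 2 * (n : ℤ) - 2 * (M : ℤ)) *
      Complex.exp (-((t : ℂ) * (v + 1))) *
      ((v + 1) * (v + 1 - (α : ℂ))) ^ (-((n : ℤ) - (j : ℤ) + 1))

namespace OrthoAux

open Metric Set NNReal ENNReal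

/-! ### The entire function `h(w) = (w-α)^q e^{tw}` and its Taylor coefficients -/

def hfun (α t : ℝ) (q : ℕ) (w : ℂ) : ℂ := (w - (α:ℂ)) ^ q * Complex.exp ((t:ℂ) * w)

lemma hfun_diff (α t : ℝ) (q : ℕ) : Differentiable ℂ (hfun α t q) :=
  ((differentiable_id.sub_const _).pow _).mul ((differentiable_const _).mul differentiable_id).cexp

lemma hfun_hasFPS (α t : ℝ) (q : ℕ) :
    HasFPowerSeriesOnBall (hfun α t q) (cauchyPowerSeries (hfun α t q) 0 2) 0 2 := by
  have := ((hfun_diff α t q).differentiableOn (s := closedBall 0 (2:ℝ≥0))).hasFPowerSeriesOnBall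
    (by norm_num : (0:ℝ≥0) < 2)
  simpa using this

def cc (α t : ℝ) (q : ℕ) (m : ℕ) : ℂ := (cauchyPowerSeries (hfun α t q) 0 2).coeff m

lemma cc_hasSum (α t : ℝ) (q : ℕ) {z : ℂ} (hz : ‖z‖ < 2) :
    HasSum (fun m : ℕ => z ^ m * cc α t q m) (hfun α t q z) := by
  have h1 := (hfun_hasFPS α t q).hasSum (y := z) ?_
  · simpa [FormalMultilinearSeries.apply_eq_pow_smul_coeff, cc, smul_eq_mul] using h1
  · simpa using (show ‖z‖ₑ < 2 by rw [enorm_eq_nnnorm]; exact_mod_cast hz)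

lemma cc_summable (α t : ℝ) (q : ℕ) : Summable (fun m : ℕ => ‖cc α t q m‖) := by
  have hr : ((1:ℝ≥0) : ℝ≥0∞) < (cauchyPowerSeries (hfun α t q) 0 2).radius :=
    lt_of_lt_of_le (by norm_num) (hfun_hasFPS α t q).r_le
  have := (cauchyPowerSeries (hfun α t q) 0 2).summable_norm_mul_pow hr
  simpa [cc, FormalMultilinearSeries.norm_apply_eq_norm_coef] using this

def ψfun (α t : ℝ) (q : ℕ) (d : ℤ) : ℂ := if 0 ≤ d then cc α t q d.toNat else 0

/-! ### `Psi` equals a Taylor coefficient -/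

lemma coeff_repr (α t : ℝ) (q m : ℕ) :
    (2 * (π:ℂ) * I)⁻¹ * (∮ z in C((0:ℂ), 2), hfun α t q z * z ^ (-(m:ℤ) - 1)) = cc α t q m := by
  have h1 : cc α t q m = (cauchyPowerSeries (hfun α t q) 0 2) m (fun _ => 1) := rfl
  rw [h1, cauchyPowerSeries_apply]
  have h2 : EqOn (fun z : ℂ => ((1:ℂ) / (z - 0)) ^ m • (z - 0)⁻¹ • hfun α t q z)
      (fun z : ℂ => hfun α t q z * z ^ (-(m:ℤ) - 1)) (sphere (0:ℂ) 2) := by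
    intro z hz
    have hz0 : z ≠ 0 := by
      have h2 : ‖z‖ = 2 := by simpa using hz
      intro h; rw [h] at h2; simp at h2
    simp only [sub_zero, smul_eq_mul, one_div, inv_pow]
    rw [show (-(m:ℤ) - 1) = -((m:ℤ) + 1) by ring, zpow_neg, ← zpow_natCast z m,
      zpow_add₀ hz0, zpow_one, mul_inv]
    ring
  rw [circleIntegral.integral_congr (by norm_num) h2, smul_eq_mul]

lemma Psi_eq (M : ℕ) (α : ℝ) (n k : ℕ) (t : ℝ) (x : ℤ) (hkn : k ≤ n) :
    Psi M α n k t x = ψfun α t (n - k) (x + 2 * (n:ℤ) - 2 * (M:ℤ) - (n - k : ℕ)) := by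
  set q : ℕ := n - k with hq
  set y : ℤ := x + 2 * (n:ℤ) - 2 * (M:ℤ) with hy
  have hcast : (n:ℤ) - (k:ℤ) = (q:ℤ) := by rw [hq]; push_cast [hkn]; ring
  have hEq : EqOn
      (fun w : ℂ => w⁻¹ * (w * (w - (α:ℂ))) ^ ((n:ℤ) - (k:ℤ)) * Complex.exp ((t:ℂ) * w) *
        w ^ (-y))
      (fun w : ℂ => hfun α t q w * w ^ ((q:ℤ) - 1 - y)) (sphere (0:ℂ) 2) := by
    intro w hw
    have hw0 : w ≠ 0 := by
      have h2 : ‖w‖ = 2 := by simpa using hw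
      intro h; rw [h] at h2; simp at h2
    simp only [hcast, zpow_natCast, mul_pow, hfun]
    rw [show (q:ℤ) - 1 - y = (q:ℤ) + (-1) + (-y) by ring, zpow_add₀ hw0, zpow_add₀ hw0,
      zpow_natCast, zpow_neg_one]
    ring
  rw [Psi, circleIntegral.integral_congr (by norm_num) hEq]
  rcases le_or_gt 0 (y - q) with hd | hd
  · set m : ℕ := (y - q).toNat with hm
    have hmz : (m:ℤ) = y - q := Int.toNat_of_nonneg hd
    have hexp : (q:ℤ) - 1 - y = -(m:ℤ) - 1 := by rw [hmz]; ring
    rw [hexp, coeff_repr, ψfun, if_pos hd]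
  · have hs : 0 ≤ (q:ℤ) - 1 - y := by omega
    set s : ℕ := ((q:ℤ) - 1 - y).toNat with hs'
    have hsz : ((q:ℤ) - 1 - y) = (s:ℤ) := (Int.toNat_of_nonneg hs).symm
    rw [hsz, ψfun, if_neg (by omega)]
    have : (∮ w in C((0:ℂ), 2), hfun α t q w * w ^ ((s:ℤ))) = 0 := by
      have hfn : ∀ w : ℂ, hfun α t q w * w ^ ((s:ℤ)) = hfun α t q w * w ^ s := by
        intro w; rw [zpow_natCast]
      simp_rw [hfn]
      refine circleIntegral_eq_zero_of_differentiable_on_off_countable (by norm_num)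
        countable_empty ?_ ?_
      · exact ((hfun_diff α t q).mul (differentiable_pow s)).continuous.continuousOn
      · intro z _; exact ((hfun_diff α t q).mul (differentiable_pow s)).differentiableAt
    rw [this, mul_zero]

/-! ### Facts about the small circle around `α - 1` -/

def Gfun (α t : ℝ) (p : ℕ) (y : ℤ) (v : ℂ) : ℂ :=
  (2 * v + 2 - (α:ℂ)) * (1 + v) ^ (y - (p:ℤ) - 1) * Complex.exp (-((t:ℂ) * (1 + v))) *
    (v - ((α:ℂ) - 1)) ^ (-(p:ℤ) - 1)

def Kfun (α t : ℝ) (p : ℕ) (v : ℂ) : ℂ :=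
  (2 * v + 2 - (α:ℂ)) * (1 + v) ^ (-(p:ℤ) - 1) * Complex.exp (-((t:ℂ) * (1 + v))) *
    (v - ((α:ℂ) - 1)) ^ (-(p:ℤ) - 1)

lemma Gfun_split (α t : ℝ) (p : ℕ) (y : ℤ) {v : ℂ} (hv1 : 1 + v ≠ 0) :
    Gfun α t p y v = Kfun α t p v * (1 + v) ^ y := by
  rw [Gfun, Kfun, show y - (p:ℤ) - 1 = y + (-(p:ℤ) - 1) by ring, zpow_add₀ hv1]
  ring

lemma sphere_facts {α r : ℝ} (hα0 : 0 < α) (hr0 : 0 < r) (hrα : r < α) {v : ℂ}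
    (hv : v ∈ sphere ((α:ℂ) - 1) r) :
    v - ((α:ℂ) - 1) ≠ 0 ∧ 1 + v ≠ 0 ∧ α - r ≤ ‖1 + v‖ ∧ ‖1 + v‖ ≤ α + r ∧
      ‖v - ((α:ℂ) - 1)‖ = r := by
  have hvr : ‖v - ((α:ℂ) - 1)‖ = r := by
    simpa [Complex.dist_eq] using (mem_sphere_iff_norm.mp hv)
  have hsplit : (1 : ℂ) + v = (v - ((α:ℂ) - 1)) + (α : ℂ) := by ring
  have hub : ‖(1:ℂ) + v‖ ≤ α + r := by
    rw [hsplit]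
    calc ‖(v - ((α:ℂ) - 1)) + (α:ℂ)‖ ≤ ‖v - ((α:ℂ) - 1)‖ + ‖(α:ℂ)‖ := norm_add_le _ _
    _ ≤ α + r := by rw [hvr, Complex.norm_real]; rw [Real.norm_eq_abs, abs_of_pos hα0]; linarith
  have hlb : α - r ≤ ‖(1:ℂ) + v‖ := by
    rw [hsplit]
    have h3 := norm_sub_le ((v - ((α:ℂ) - 1)) + (α:ℂ)) (v - ((α:ℂ) - 1))
    have h4 : ((v - ((α:ℂ) - 1)) + (α:ℂ)) - (v - ((α:ℂ) - 1)) = (α:ℂ) := by ring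
    rw [h4] at h3
    have hα : ‖(α:ℂ)‖ = α := by rw [Complex.norm_real, Real.norm_eq_abs, abs_of_pos hα0]
    rw [hα, hvr] at h3
    linarith
  refine ⟨?_, ?_, hlb, hub, hvr⟩
  · intro h; rw [h] at hvr; simp at hvr; linarith
  · intro h; rw [h] at hlb; simp at hlb; linarith

lemma closedBall_facts {α r : ℝ} (hα0 : 0 < α) (hrα : r < α) {v : ℂ}
    (hv : v ∈ closedBall ((α:ℂ) - 1) r) : 1 + v ≠ 0 := by
  have hvr : ‖v - ((α:ℂ) - 1)‖ ≤ r := by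
    simpa [Complex.dist_eq] using (mem_closedBall_iff_norm.mp hv)
  intro h
  have hv' : v = -1 := by linear_combination h
  rw [hv'] at hvr
  have : ‖(-1 : ℂ) - ((α:ℂ) - 1)‖ = α := by
    rw [show (-1 : ℂ) - ((α:ℂ) - 1) = -(α:ℂ) by ring, norm_neg, Complex.norm_real,
      Real.norm_eq_abs, abs_of_pos hα0]
  rw [this] at hvr; linarith

/-! ### `Phi` as integral of `Gfun` -/

lemma Phi_repr (M : ℕ) (α : ℝ) (n j : ℕ) (t : ℝ) (r : ℝ) (x : ℤ) (hjn : j ≤ n)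
    (hα0 : 0 < α) (hr0 : 0 < r) (hrα : r < α) :
    Phi M α n j t r x = (2 * (π:ℂ) * I)⁻¹ *
      ∮ v in C((α:ℂ) - 1, r), Gfun α t (n - j) (x + 2 * (n:ℤ) - 2 * (M:ℤ)) v := by
  set p : ℕ := n - j with hp
  set y : ℤ := x + 2 * (n:ℤ) - 2 * (M:ℤ) with hy
  have hcast : -((n:ℤ) - (j:ℤ) + 1) = -(p:ℤ) - 1 := by rw [hp]; push_cast [hjn]; ring
  have hEq : EqOn
      (fun v : ℂ => (2 * v + 2 - (α:ℂ)) * (1 + v) ^ y * Complex.exp (-((t:ℂ) * (v + 1))) *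
        ((v + 1) * (v + 1 - (α:ℂ))) ^ (-((n:ℤ) - (j:ℤ) + 1)))
      (fun v : ℂ => Gfun α t p y v) (sphere ((α:ℂ) - 1) r) := by
    intro v hv
    obtain ⟨hvζ, hv1, -, -, -⟩ := sphere_facts hα0 hr0 hrα hv
    simp only [hcast, Gfun]
    rw [mul_zpow]
    rw [show -((t:ℂ) * (v + 1)) = -((t:ℂ) * (1 + v)) by ring]
    have h2 : (v + 1 - (α:ℂ)) = v - ((α:ℂ) - 1) := by ring
    have h1 : (v + 1 : ℂ) = 1 + v := by ring
    rw [h2, h1]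
    rw [show y - (p:ℤ) - 1 = y + (-(p:ℤ) - 1) by ring, zpow_add₀ hv1]
    ring
  rw [Phi, circleIntegral.integral_congr hr0.le hEq]

/-! ### residue computation -/

lemma circleIntegral_add {f g : ℂ → ℂ} {c : ℂ} {R : ℝ} (hf : CircleIntegrable f c R)
    (hg : CircleIntegrable g c R) :
    (∮ z in C(c, R), f z + g z) = (∮ z in C(c, R), f z) + ∮ z in C(c, R), g z := by
  simp only [circleIntegral, smul_add, intervalIntegral.integral_add hf.out hg.out]

lemma residue_final (α r : ℝ) (hα0 : 0 < α) (hr0 : 0 < r) (hrα : r < α) (e : ℤ) :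
    (∮ v in C((α:ℂ) - 1, r), (2 * v + 2 - (α:ℂ)) * (1 + v) ^ e * (v - ((α:ℂ) - 1)) ^ e) =
      if e = -1 then 2 * (π:ℂ) * I else 0 := by
  by_cases he : e = -1
  · subst he
    rw [if_pos rfl]
    have hEq : EqOn (fun v : ℂ => (2 * v + 2 - (α:ℂ)) * (1 + v) ^ (-1:ℤ) *
        (v - ((α:ℂ) - 1)) ^ (-1:ℤ))
        (fun v : ℂ => (v - (-1:ℂ))⁻¹ + (v - ((α:ℂ) - 1))⁻¹) (sphere ((α:ℂ) - 1) r) := by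
      intro v hv
      obtain ⟨hvζ, hv1, -, -, -⟩ := sphere_facts hα0 hr0 hrα hv
      simp only [zpow_neg_one]
      have hv1' : v - (-1:ℂ) ≠ 0 := by intro h; apply hv1; linear_combination h
      rw [inv_add_inv hv1' hvζ]
      rw [show v - (-1:ℂ) + (v - ((α:ℂ) - 1)) = 2 * v + 2 - (α:ℂ) by ring,
        show v - (-1:ℂ) = 1 + v by ring, div_eq_mul_inv, mul_inv]
      ring
    rw [circleIntegral.integral_congr hr0.le hEq]
    have hint1 : CircleIntegrable (fun v : ℂ => (v - (-1:ℂ))⁻¹) ((α:ℂ) - 1) r := by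
      have : ∀ v ∈ sphere ((α:ℂ) - 1) r, v - (-1:ℂ) ≠ 0 := by
        intro v hv
        obtain ⟨-, hv1, -, -, -⟩ := sphere_facts hα0 hr0 hrα hv
        intro h; apply hv1; linear_combination h
      exact ContinuousOn.circleIntegrable hr0.le
        (((continuousOn_id.sub continuousOn_const)).inv₀ this)
    have hint2 : CircleIntegrable (fun v : ℂ => (v - ((α:ℂ) - 1))⁻¹) ((α:ℂ) - 1) r := by
      have : ∀ v ∈ sphere ((α:ℂ) - 1) r, v - ((α:ℂ) - 1) ≠ 0 := fun v hv =>
        (sphere_facts hα0 hr0 hrα hv).1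
      exact ContinuousOn.circleIntegrable hr0.le
        (((continuousOn_id.sub continuousOn_const)).inv₀ this)
    rw [circleIntegral_add hint1 hint2]
    have h1 : (∮ v in C((α:ℂ) - 1, r), (v - (-1:ℂ))⁻¹) = 0 := by
      refine circleIntegral_eq_zero_of_differentiable_on_off_countable hr0.le countable_empty ?_ ?_
      · apply ContinuousOn.inv₀ (continuousOn_id.sub continuousOn_const)
        intro v hv
        have h1v := closedBall_facts hα0 hrα hv
        intro h; simp only [Pi.sub_apply, id_eq] at h; apply h1v; linear_combination h
      · intro z hz
        have h1v := closedBall_facts hα0 hrα (ball_subset_closedBall hz.1)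
        have : z - (-1:ℂ) ≠ 0 := by intro h; apply h1v; linear_combination h
        exact (differentiableAt_id.sub_const _).inv this
    rw [h1, circleIntegral.integral_sub_center_inv _ hr0.ne', zero_add]
  · rw [if_neg he]
    have he' : ((e:ℂ) + 1) ≠ 0 := by
      have h0 : ((e + 1 : ℤ) : ℂ) ≠ 0 := Int.cast_ne_zero.mpr (by omega)
      push_cast at h0
      exact h0
    refine circleIntegral.integral_eq_zero_of_hasDerivWithinAt (f := fun v : ℂ =>
      ((1 + v) * (v - ((α:ℂ) - 1))) ^ (e + 1) / ((e:ℂ) + 1)) hr0.le ?_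
    intro v hv
    obtain ⟨hvζ, hv1, -, -, -⟩ := sphere_facts hα0 hr0 hrα hv
    have hu0 : (1 + v) * (v - ((α:ℂ) - 1)) ≠ 0 := mul_ne_zero hv1 hvζ
    have hu : HasDerivAt (fun v : ℂ => (1 + v) * (v - ((α:ℂ) - 1))) (2 * v + 2 - (α:ℂ)) v := by
      have h1 : HasDerivAt (fun v : ℂ => 1 + v) 1 v := (hasDerivAt_id v).const_add 1
      have h2 : HasDerivAt (fun v : ℂ => v - ((α:ℂ) - 1)) 1 v := (hasDerivAt_id v).sub_const _
      have := h1.fun_mul h2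
      rw [show (2 * v + 2 - (α:ℂ)) = 1 * (v - ((α:ℂ) - 1)) + (1 + v) * 1 by ring]
      exact this
    have hz := hasDerivAt_zpow (e + 1) ((1 + v) * (v - ((α:ℂ) - 1))) (Or.inl hu0)
    have hcomp := (hz.comp v hu).div_const ((e:ℂ) + 1)
    have heq : ((e + 1 : ℤ) : ℂ) * ((1 + v) * (v - ((α:ℂ) - 1))) ^ (e + 1 - 1) *
        (2 * v + 2 - (α:ℂ)) / ((e:ℂ) + 1) =
        (2 * v + 2 - (α:ℂ)) * (1 + v) ^ e * (v - ((α:ℂ) - 1)) ^ e := by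
      rw [show e + 1 - 1 = e by ring, mul_zpow]
      push_cast
      field_simp
    rw [heq] at hcomp
    exact hcomp.hasDerivWithinAt

/-! ### real zpow bound -/

lemma zpow_bound {a b s : ℝ} (ha : 0 < a) (hab : a ≤ s) (hsb : s ≤ b) (hb1 : b < 1)
    {e e0 : ℤ} (he : e0 ≤ e) : s ^ e ≤ a ^ e0 + b ^ e0 := by
  have hs0 : 0 < s := lt_of_lt_of_le ha hab
  have hs1 : s ≤ 1 := le_of_lt (lt_of_le_of_lt hsb hb1)
  have h1 : s ^ e ≤ s ^ e0 := zpow_le_zpow_right_of_le_one₀ hs0 hs1 he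
  rcases le_or_gt 0 e0 with h0 | h0
  · set m : ℕ := e0.toNat with hm
    have hmz : (m:ℤ) = e0 := Int.toNat_of_nonneg h0
    have h2 : s ^ e0 ≤ b ^ e0 := by
      rw [← hmz, zpow_natCast, zpow_natCast]
      exact pow_le_pow_left₀ hs0.le hsb m
    have h3 : 0 < a ^ e0 := zpow_pos ha _
    linarith
  · set m : ℕ := (-e0).toNat with hm
    have hmz : (m:ℤ) = -e0 := Int.toNat_of_nonneg (by omega)
    have h2 : s ^ e0 ≤ a ^ e0 := by
      rw [show e0 = -(m:ℤ) by omega, zpow_neg, zpow_neg, zpow_natCast, zpow_natCast]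
      exact inv_anti₀ (pow_pos ha m) (pow_le_pow_left₀ ha.le hab m)
    have h3 : 0 < b ^ e0 := zpow_pos (lt_of_lt_of_le ha (hab.trans hsb)) _
    linarith

/-! ### norm bound for `Gfun` on the circle -/

lemma Gfun_norm_bound {α t r : ℝ} (hα0 : 0 < α) (hα1 : α < 1) (ht : 0 ≤ t) (hr0 : 0 < r)
    (hrα : r < α) (hr1 : r < 1 - α) (p : ℕ) {y : ℤ} (E : ℤ) (hy : E ≤ y - (p:ℤ) - 1)
    {v : ℂ} (hv : v ∈ sphere ((α:ℂ) - 1) r) :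
    ‖Gfun α t p y v‖ ≤ 3 * ((α - r) ^ E + (α + r) ^ E) * r ^ (-(p:ℤ) - 1) := by
  obtain ⟨hvζ, hv1, hlb, hub, hvr⟩ := sphere_facts hα0 hr0 hrα hv
  have hA : ‖2 * v + 2 - (α:ℂ)‖ ≤ 3 := by
    rw [show (2 * v + 2 - (α:ℂ)) = 2 * (1 + v) - (α:ℂ) by ring]
    calc ‖2 * (1 + v) - (α:ℂ)‖ ≤ ‖2 * (1 + v)‖ + ‖(α:ℂ)‖ := norm_sub_le _ _
    _ = 2 * ‖1 + v‖ + α := by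
        rw [norm_mul, Complex.norm_real, Real.norm_eq_abs, abs_of_pos hα0]
        norm_num
    _ ≤ 3 := by linarith
  have hB : ‖(1 + v) ^ (y - (p:ℤ) - 1)‖ ≤ (α - r) ^ E + (α + r) ^ E := by
    rw [norm_zpow]
    exact zpow_bound (by linarith) hlb hub (by linarith) hy
  have hC : ‖Complex.exp (-((t:ℂ) * (1 + v)))‖ ≤ 1 := by
    rw [Complex.norm_exp]
    have hre : α - r ≤ (1 + v).re := by
      have h5 : (1 + v) = (v - ((α:ℂ) - 1)) + (α:ℂ) := by ring
      have h6 : (1 + v).re = (v - ((α:ℂ) - 1)).re + α := by rw [h5]; simp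
      have h7 : -((r:ℝ)) ≤ (v - ((α:ℂ) - 1)).re := by
        have := Complex.abs_re_le_norm (v - ((α:ℂ) - 1))
        rw [hvr] at this
        cases abs_le.mp this with
        | intro h _ => linarith
      linarith
    have harg : (-((t:ℂ) * (1 + v))).re ≤ 0 := by
      have : (-((t:ℂ) * (1 + v))).re = -(t * (1 + v).re) := by
        simp [Complex.mul_re]
      rw [this]
      have : 0 ≤ t * (1 + v).re := mul_nonneg ht (by linarith)
      linarith
    calc Real.exp (-((t:ℂ) * (1 + v))).re ≤ Real.exp 0 := Real.exp_le_exp.mpr harg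
    _ = 1 := Real.exp_zero
  have hD : ‖(v - ((α:ℂ) - 1)) ^ (-(p:ℤ) - 1)‖ = r ^ (-(p:ℤ) - 1) := by
    rw [norm_zpow, hvr]
  have hBnn : (0:ℝ) ≤ (α - r) ^ E + (α + r) ^ E := by
    have b1 : (0:ℝ) < (α - r) ^ E := zpow_pos (by linarith) _
    have b2 : (0:ℝ) < (α + r) ^ E := zpow_pos (by linarith) _
    linarith
  calc ‖Gfun α t p y v‖
      = ‖2 * v + 2 - (α:ℂ)‖ * ‖(1 + v) ^ (y - (p:ℤ) - 1)‖ *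
        ‖Complex.exp (-((t:ℂ) * (1 + v)))‖ * ‖(v - ((α:ℂ) - 1)) ^ (-(p:ℤ) - 1)‖ := by
        rw [Gfun, norm_mul, norm_mul, norm_mul]
    _ ≤ 3 * ((α - r) ^ E + (α + r) ^ E) * 1 * (r ^ (-(p:ℤ) - 1)) := by
        have hrp : (0:ℝ) ≤ r ^ (-(p:ℤ) - 1) := (zpow_pos hr0 _).le
        gcongr
        · exact hD.le
    _ = 3 * ((α - r) ^ E + (α + r) ^ E) * r ^ (-(p:ℤ) - 1) := by ring

/-! ### continuity of `Gfun` on the circle -/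

lemma Gfun_contOn {α t r : ℝ} (hα0 : 0 < α) (hr0 : 0 < r) (hrα : r < α) (p : ℕ) (y : ℤ) :
    ContinuousOn (Gfun α t p y) (sphere ((α:ℂ) - 1) r) := by
  have hA : Continuous fun v : ℂ => 2 * v + 2 - (α:ℂ) :=
    ((continuous_const.mul continuous_id).add continuous_const).sub continuous_const
  have hB : ContinuousOn (fun v : ℂ => (1 + v) ^ (y - (p:ℤ) - 1)) (sphere ((α:ℂ) - 1) r) :=
    ContinuousOn.zpow₀ (continuous_const.add continuous_id).continuousOn _
      (fun v hv => Or.inl (sphere_facts hα0 hr0 hrα hv).2.1)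
  have hC : Continuous fun v : ℂ => Complex.exp (-((t:ℂ) * (1 + v))) :=
    Complex.continuous_exp.comp ((continuous_const.mul (continuous_const.add continuous_id)).neg)
  have hD : ContinuousOn (fun v : ℂ => (v - ((α:ℂ) - 1)) ^ (-(p:ℤ) - 1))
      (sphere ((α:ℂ) - 1) r) :=
    ContinuousOn.zpow₀ (continuous_id.sub continuous_const).continuousOn _
      (fun v hv => Or.inl (sphere_facts hα0 hr0 hrα hv).1)
  exact ((hA.continuousOn.mul hB).mul hC.continuousOn).mul hD

/-! ### summing the geometric-type series -/

lemma tsum_shift (α t : ℝ) (q : ℕ) (s : ℤ) {z : ℂ} (hz0 : z ≠ 0) (hz : ‖z‖ < 1) :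
    ∑' x : ℤ, z ^ (x + s) * ψfun α t q (x + s - q) = z ^ (q:ℤ) * hfun α t q z := by
  set i : ℕ → ℤ := fun m => (m:ℤ) + (q:ℤ) - s with hi
  have hinj : Function.Injective i := by
    intro a b hab
    simp only [hi] at hab
    omega
  have hsupp : Function.support (fun x : ℤ => z ^ (x + s) * ψfun α t q (x + s - q)) ⊆
      Set.range i := by
    intro x hx
    rcases le_or_gt 0 (x + s - q) with h0 | h0
    · exact ⟨(x + s - q).toNat, by simp only [hi]; omega⟩
    · exfalso
      apply hx
      simp only [ψfun, if_neg (not_le.mpr h0), mul_zero]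
  rw [← hinj.tsum_eq hsupp]
  have hterm : ∀ m : ℕ, z ^ (i m + s) * ψfun α t q (i m + s - q) =
      z ^ (q:ℤ) * (z ^ m * cc α t q m) := by
    intro m
    have h1 : i m + s = (m:ℤ) + (q:ℤ) := by simp only [hi]; ring
    have h2 : i m + s - q = (m:ℤ) := by omega
    rw [h1, show (m:ℤ) + (q:ℤ) - (q:ℤ) = (m:ℤ) by ring, ψfun, if_pos (Int.natCast_nonneg m)]
    simp only [Int.toNat_natCast]
    rw [zpow_add₀ hz0, zpow_natCast]
    ring
  rw [tsum_congr hterm, _root_.tsum_mul_left,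
    (cc_hasSum α t q (lt_trans hz one_lt_two)).tsum_eq]

end OrthoAux

/-- Orthogonality `∑_{x∈ℤ} Φ^{n,t}_{n-j}(x) Ψ^{n,t}_{n-k}(x) = δ_{j,k}` for `n ≤ M`
(absolute convergence included). -/
theorem orthogonality_case_n_le_M
    (M : ℕ) (hM : 1 ≤ M) (α : ℝ) (hα0 : 0 < α) (hα1 : α < 1)
    (t : ℝ) (ht : 0 ≤ t) (n j k : ℕ)
    (hj1 : 1 ≤ j) (hjn : j ≤ n) (hk1 : 1 ≤ k) (hkn : k ≤ n) (hnM : n ≤ M) :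
    ∃ ε > 0, ∀ r : ℝ, 0 < r → r < ε →
      Summable (fun x : ℤ => ‖Phi M α n j t r x * Psi M α n k t x‖) ∧
      (∑' x : ℤ, Phi M α n j t r x * Psi M α n k t x) =
        if j = k then 1 else 0 := by
  classical
  have h1α : (0:ℝ) < 1 - α := by linarith
  refine ⟨min α (1 - α), lt_min hα0 h1α, ?_⟩
  intro r hr0 hrε
  have hrα : r < α := lt_of_lt_of_le hrε (min_le_left _ _)
  have hr1 : r < 1 - α := lt_of_lt_of_le hrε (min_le_right _ _)
  set p : ℕ := n - j with hp
  set q : ℕ := n - k with hq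
  set ζ : ℂ := (α:ℂ) - 1 with hζ
  set e₀ : ℤ := (q:ℤ) - (p:ℤ) - 1 with he₀
  set CB : ℝ := 3 * ((α - r) ^ e₀ + (α + r) ^ e₀) * r ^ (-(p:ℤ) - 1) with hCB
  have hCB0 : 0 ≤ CB := by
    have b1 : (0:ℝ) < (α - r) ^ e₀ := zpow_pos (by linarith) _
    have b2 : (0:ℝ) < (α + r) ^ e₀ := zpow_pos (by linarith) _
    have b3 : (0:ℝ) < r ^ (-(p:ℤ) - 1) := zpow_pos hr0 _
    rw [hCB]; positivity
  set F : ℤ → ℝ → ℂ := fun x θ =>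
    deriv (circleMap ζ r) θ • (OrthoAux.Gfun α t p (x + 2*(n:ℤ) - 2*(M:ℤ)) (circleMap ζ r θ) *
      OrthoAux.ψfun α t q (x + 2*(n:ℤ) - 2*(M:ℤ) - (q:ℤ))) with hF
  set bnd : ℤ → ℝ := fun x =>
    r * CB * ‖OrthoAux.ψfun α t q (x + 2*(n:ℤ) - 2*(M:ℤ) - (q:ℤ))‖ with hbnd
  -- Step 1: the product as an integral over (0, 2π]
  have hprod : ∀ x : ℤ, Phi M α n j t r x * Psi M α n k t x
      = (2*(π:ℂ)*I)⁻¹ * ∫ θ in Set.Ioc 0 (2*π), F x θ := by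
    intro x
    rw [OrthoAux.Phi_repr M α n j t r x hjn hα0 hr0 hrα, OrthoAux.Psi_eq M α n k t x hkn]
    rw [mul_assoc]
    congr 1
    have hsc : (∮ v in C(ζ, r), OrthoAux.Gfun α t p (x + 2*(n:ℤ) - 2*(M:ℤ)) v) *
        OrthoAux.ψfun α t q (x + 2*(n:ℤ) - 2*(M:ℤ) - (q:ℤ))
        = ∮ v in C(ζ, r), (OrthoAux.Gfun α t p (x + 2*(n:ℤ) - 2*(M:ℤ)) v *
            OrthoAux.ψfun α t q (x + 2*(n:ℤ) - 2*(M:ℤ) - (q:ℤ))) := by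
      simpa [smul_eq_mul] using (circleIntegral.integral_smul_const
        (OrthoAux.Gfun α t p (x + 2*(n:ℤ) - 2*(M:ℤ)))
        (OrthoAux.ψfun α t q (x + 2*(n:ℤ) - 2*(M:ℤ) - (q:ℤ))) ζ r).symm
    have harg : x + 2*(n:ℤ) - 2*(M:ℤ) - ((q:ℕ):ℤ) = x + 2*(n:ℤ) - 2*(M:ℤ) - (q:ℤ) := rfl
    rw [harg, hsc, circleIntegral]
    rw [intervalIntegral.integral_of_le Real.two_pi_pos.le]
  -- continuity of the integrands
  have hFcont : ∀ x : ℤ, Continuous (F x) := by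
    intro x
    rw [hF]; apply Continuous.fun_smul
    · have : deriv (circleMap ζ r) = fun θ => circleMap 0 r θ * I := by
        funext θ; exact deriv_circleMap ζ r θ
      rw [this]
      exact (continuous_circleMap 0 r).mul continuous_const
    · apply Continuous.mul _ continuous_const
      exact (OrthoAux.Gfun_contOn hα0 hr0 hrα p _).comp_continuous
        (continuous_circleMap ζ r) (fun θ => circleMap_mem_sphere ζ hr0.le θ)
  -- pointwise norm bound
  have hFbound : ∀ (x : ℤ) (θ : ℝ), ‖F x θ‖ ≤ bnd x := by
    intro x θ
    have hvs : circleMap ζ r θ ∈ Metric.sphere ζ r := circleMap_mem_sphere ζ hr0.le θ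
    rcases le_or_gt 0 (x + 2*(n:ℤ) - 2*(M:ℤ) - (q:ℤ)) with h0 | h0
    · have hyE : e₀ ≤ (x + 2*(n:ℤ) - 2*(M:ℤ)) - (p:ℤ) - 1 := by omega
      have hG := OrthoAux.Gfun_norm_bound hα0 hα1 ht hr0 hrα hr1 p e₀ hyE hvs
      have hder : ‖deriv (circleMap ζ r) θ‖ = r := by
        rw [deriv_circleMap, norm_mul,
          norm_circleMap_zero, Complex.norm_I, abs_of_pos hr0, mul_one]
      calc ‖F x θ‖ = ‖deriv (circleMap ζ r) θ‖ *
            (‖OrthoAux.Gfun α t p (x + 2*(n:ℤ) - 2*(M:ℤ)) (circleMap ζ r θ)‖ *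
             ‖OrthoAux.ψfun α t q (x + 2*(n:ℤ) - 2*(M:ℤ) - (q:ℤ))‖) := by
            rw [hF]; simp only [norm_smul, norm_mul]
      _ ≤ r * (CB * ‖OrthoAux.ψfun α t q (x + 2*(n:ℤ) - 2*(M:ℤ) - (q:ℤ))‖) := by
            rw [hder]
            apply mul_le_mul_of_nonneg_left _ hr0.le
            exact mul_le_mul_of_nonneg_right hG (norm_nonneg _)
      _ = bnd x := by rw [hbnd]; ring
    · have hψ : OrthoAux.ψfun α t q (x + 2*(n:ℤ) - 2*(M:ℤ) - (q:ℤ)) = 0 := by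
        rw [OrthoAux.ψfun, if_neg (not_le.mpr h0)]
      rw [hF, hbnd]
      simp [hψ]
  -- summability of the bound
  have hsum_bnd : Summable bnd := by
    set i : ℕ → ℤ := fun m => (m:ℤ) + ((q:ℤ) - 2*(n:ℤ) + 2*(M:ℤ)) with hi
    have hinj : Function.Injective i := by intro a b hab; simp only [hi] at hab; omega
    have hzero : ∀ x ∉ Set.range i, bnd x = 0 := by
      intro x hx
      have h0 : x + 2*(n:ℤ) - 2*(M:ℤ) - (q:ℤ) < 0 := by
        by_contra hcon
        push_neg at hcon
        exact hx ⟨(x + 2*(n:ℤ) - 2*(M:ℤ) - (q:ℤ)).toNat, by simp only [hi]; omega⟩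
      have hψ0 : OrthoAux.ψfun α t q (x + 2*(n:ℤ) - 2*(M:ℤ) - (q:ℤ)) = 0 := by
        rw [OrthoAux.ψfun, if_neg (not_le.mpr h0)]
      rw [hbnd]
      simp only [hψ0, norm_zero, mul_zero]
    rw [← hinj.summable_iff hzero]
    apply Summable.congr (((OrthoAux.cc_summable α t q).mul_left (r * CB)))
    intro m
    have h1 : i m + 2*(n:ℤ) - 2*(M:ℤ) - (q:ℤ) = (m:ℤ) := by simp only [hi]; ring
    simp only [Function.comp_apply, hbnd, h1, OrthoAux.ψfun, if_pos (Int.natCast_nonneg m),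
      Int.toNat_natCast]
  -- integral of each |F x| is at most 2π * bnd x
  have hFint : ∀ x : ℤ, Integrable (F x) (volume.restrict (Set.Ioc 0 (2*π))) := by
    intro x
    exact (hFcont x).integrableOn_Ioc
  have hIntBound : ∀ x : ℤ, (∫ θ in Set.Ioc 0 (2*π), ‖F x θ‖) ≤ (2*π) * bnd x := by
    intro x
    have hintf : IntegrableOn (fun θ => ‖F x θ‖) (Set.Ioc 0 (2*π)) :=
      (hFcont x).norm.integrableOn_Ioc
    have hintg : IntegrableOn (fun _ : ℝ => bnd x) (Set.Ioc 0 (2*π)) :=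
      integrableOn_const measure_Ioc_lt_top.ne
    calc (∫ θ in Set.Ioc 0 (2*π), ‖F x θ‖) ≤ ∫ _θ in Set.Ioc 0 (2*π), bnd x :=
          setIntegral_mono_on hintf hintg measurableSet_Ioc (fun θ _ => hFbound x θ)
    _ = (2*π) * bnd x := by
          rw [setIntegral_const, Real.volume_real_Ioc, smul_eq_mul]
          rw [max_eq_left (by linarith [Real.pi_pos] : (0:ℝ) ≤ 2*π - 0)]
          ring_nf
  have hbnd_nonneg : ∀ x : ℤ, 0 ≤ bnd x := by
    intro x
    rw [hbnd]
    exact mul_nonneg (mul_nonneg hr0.le hCB0) (norm_nonneg _)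
  -- summability of the integrals of norms
  have hsum_int : Summable fun x : ℤ => ∫ θ in Set.Ioc 0 (2*π), ‖F x θ‖ := by
    apply Summable.of_nonneg_of_le _ hIntBound (hsum_bnd.mul_left (2*π))
    intro x
    exact integral_nonneg (fun θ => norm_nonneg _)
  -- first conclusion
  have hsummable : Summable (fun x : ℤ => ‖Phi M α n j t r x * Psi M α n k t x‖) := by
    apply Summable.of_nonneg_of_le (fun x => norm_nonneg _) _ hsum_bnd
    intro x
    rw [hprod x, norm_mul]
    have h2pi : ‖((2*(π:ℂ)*I))⁻¹‖ = (2*π)⁻¹ := by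
      rw [norm_inv]
      congr 1
      rw [norm_mul, norm_mul,
        Complex.norm_I, Complex.norm_two, mul_one, Complex.norm_real, Real.norm_eq_abs, abs_of_pos Real.pi_pos]
    rw [h2pi]
    calc (2*π)⁻¹ * ‖∫ θ in Set.Ioc 0 (2*π), F x θ‖
        ≤ (2*π)⁻¹ * ((2*π) * bnd x) := by
          apply mul_le_mul_of_nonneg_left _ (by positivity)
          exact le_trans (norm_integral_le_integral_norm _) (hIntBound x)
    _ = bnd x := by
          field_simp
  refine ⟨hsummable, ?_⟩
  -- pointwise sum inside the integral
  have hpt : ∀ θ : ℝ, (∑' x : ℤ, F x θ) = deriv (circleMap ζ r) θ •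
      (OrthoAux.Kfun α t p (circleMap ζ r θ) *
        ((1 + circleMap ζ r θ) ^ ((q:ℕ):ℤ) * OrthoAux.hfun α t q (1 + circleMap ζ r θ))) := by
    intro θ
    set v : ℂ := circleMap ζ r θ with hv
    have hvs : v ∈ Metric.sphere ζ r := circleMap_mem_sphere ζ hr0.le θ
    obtain ⟨hvζ, hv1, hlb, hub, hvr⟩ := OrthoAux.sphere_facts hα0 hr0 hrα hvs
    have hz1 : ‖(1:ℂ) + v‖ < 1 := lt_of_le_of_lt hub (by linarith)
    have hterm : ∀ x : ℤ, F x θ = (deriv (circleMap ζ r) θ * OrthoAux.Kfun α t p v) *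
        ((1 + v) ^ (x + (2*(n:ℤ) - 2*(M:ℤ))) *
          OrthoAux.ψfun α t q (x + (2*(n:ℤ) - 2*(M:ℤ)) - (q:ℤ))) := by
      intro x
      rw [hF]
      simp only [smul_eq_mul, ← hv]
      rw [show x + 2*(n:ℤ) - 2*(M:ℤ) = x + (2*(n:ℤ) - 2*(M:ℤ)) by ring]
      rw [OrthoAux.Gfun_split α t p _ hv1]
      ring
    rw [tsum_congr hterm, _root_.tsum_mul_left,
      OrthoAux.tsum_shift α t q (2*(n:ℤ) - 2*(M:ℤ)) hv1 hz1]
    rw [smul_eq_mul]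
    ring
  -- swap sum and integral, convert back to a circle integral, and compute
  calc (∑' x : ℤ, Phi M α n j t r x * Psi M α n k t x)
      = ∑' x : ℤ, (2*(π:ℂ)*I)⁻¹ * ∫ θ in Set.Ioc 0 (2*π), F x θ := tsum_congr hprod
  _ = (2*(π:ℂ)*I)⁻¹ * ∑' x : ℤ, ∫ θ in Set.Ioc 0 (2*π), F x θ := _root_.tsum_mul_left
  _ = (2*(π:ℂ)*I)⁻¹ * ∫ θ in Set.Ioc 0 (2*π), (∑' x : ℤ, F x θ) := by
        rw [MeasureTheory.integral_tsum_of_summable_integral_norm hFint hsum_int]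
  _ = (2*(π:ℂ)*I)⁻¹ * ∮ v in C(ζ, r), (OrthoAux.Kfun α t p v *
        ((1 + v) ^ ((q:ℕ):ℤ) * OrthoAux.hfun α t q (1 + v))) := by
        congr 1
        rw [circleIntegral, intervalIntegral.integral_of_le Real.two_pi_pos.le]
        exact integral_congr_ae (Filter.Eventually.of_forall (fun θ => hpt θ))
  _ = (2*(π:ℂ)*I)⁻¹ * ∮ v in C(ζ, r),
        ((2 * v + 2 - (α:ℂ)) * (1 + v) ^ e₀ * (v - ζ) ^ e₀) := by
        congr 1
        apply circleIntegral.integral_congr hr0.le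
        intro v hvs
        obtain ⟨hvζ, hv1, hlb, hub, hvr⟩ := OrthoAux.sphere_facts hα0 hr0 hrα hvs
        simp only [OrthoAux.Kfun, OrthoAux.hfun]
        rw [show (1 + v) - (α:ℂ) = v - ζ by rw [hζ]; ring]
        rw [← zpow_natCast (v - ζ) q]
        rw [show e₀ = (-(p:ℤ) - 1) + (q:ℤ) by rw [he₀]; ring]
        rw [zpow_add₀ hv1, zpow_add₀ hvζ]
        have hexp : Complex.exp (-((t:ℂ) * (1 + v))) * Complex.exp ((t:ℂ) * (1 + v)) = 1 := by
          rw [← Complex.exp_add]; simp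
        linear_combination ((2 * v + 2 - (α:ℂ)) * (1 + v) ^ (-(p:ℤ) - 1) *
          (v - ζ) ^ (-(p:ℤ) - 1) * (1 + v) ^ ((q:ℕ):ℤ) * (v - ζ) ^ ((q:ℕ):ℤ)) * hexp
  _ = (2*(π:ℂ)*I)⁻¹ * (if e₀ = -1 then 2*(π:ℂ)*I else 0) := by
        rw [hζ, OrthoAux.residue_final α r hα0 hr0 hrα e₀]
  _ = if j = k then 1 else 0 := by
        have hjk : (e₀ = -1) ↔ (j = k) := by omega
        by_cases hcase : j = k
        · rw [if_pos hcase, if_pos (hjk.mpr hcase), inv_mul_cancel₀ Complex.two_pi_I_ne_zero]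
        · rw [if_neg hcase, if_neg (fun h => hcase (hjk.mp h)), mul_zero]
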